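/- arXiv:2604.26913 — 3 statements merged into one kernel-verified Lean document; each statement's English description precedes it below -/
import Mathlib

section
/- Let M ⊂ ℝ^d be an affine subspace and φ : M \ {0} → S^{d-1}, x ↦ x/‖x‖. Then φ(M \ {0}) is a null set with respect to the uniform (surface) measure on S^{d-1} in each of the following cases: (i) 0 ∈ M and dim(M) < d; (ii) 0 ∉ M and dim(M) < d − 1. -/
open MeasureTheory Metric

theorem stmt9 {d : ℕ} (M : AffineSubspace ℝ (EuclideanSpace ℝ (Fin d)))
    (hcase : ((0 : EuclideanSpace ℝ (Fin d)) ∈ M ∧ Module.finrank ℝ M.direction < d)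
      ∨ ((0 : EuclideanSpace ℝ (Fin d)) ∉ M ∧ Module.finrank ℝ M.direction < d - 1)) :
    (volume : Measure (EuclideanSpace ℝ (Fin d))).toSphere
      {y : sphere (0 : EuclideanSpace ℝ (Fin d)) 1 |
        ∃ x : EuclideanSpace ℝ (Fin d), x ∈ M ∧ x ≠ 0 ∧ (y : EuclideanSpace ℝ (Fin d)) = ‖x‖⁻¹ • x}
      = 0 := by
  obtain ⟨W, hWlt, hMW⟩ : ∃ W : Submodule ℝ (EuclideanSpace ℝ (Fin d)),
      Module.finrank ℝ W < d ∧ ∀ x ∈ M, x ∈ W := by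
    rcases hcase with ⟨h0, hlt⟩ | ⟨h0, hlt⟩
    · refine ⟨M.direction, hlt, fun x hx => ?_⟩
      simpa using AffineSubspace.vsub_mem_direction hx h0
    · rcases Set.eq_empty_or_nonempty (M : Set (EuclideanSpace ℝ (Fin d))) with he | ⟨p, hp⟩
      · refine ⟨⊥, by simp; omega, fun x hx => ?_⟩
        exact absurd hx (by simp [← AffineSubspace.mem_coe, he])
      · refine ⟨M.direction ⊔ (ℝ ∙ p), ?_, fun x hx => ?_⟩
        · have h1 : Module.finrank ℝ ↥(M.direction ⊔ (ℝ ∙ p)) ≤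
              Module.finrank ℝ M.direction + Module.finrank ℝ (ℝ ∙ p) := by
            have := Submodule.finrank_sup_add_finrank_inf_eq M.direction (ℝ ∙ p)
            omega
          have h2 : Module.finrank ℝ (ℝ ∙ p) ≤ 1 :=
            (finrank_span_le_card ({p} : Set (EuclideanSpace ℝ (Fin d)))).trans (by simp)
          omega
        · have hxp : x - p ∈ M.direction := by
            simpa using AffineSubspace.vsub_mem_direction hx hp
          have : x = (x - p) + p := (sub_add_cancel x p).symm
          rw [this]
          exact Submodule.add_mem _ (Submodule.mem_sup_left hxp)
            (Submodule.mem_sup_right (Submodule.mem_span_singleton_self p))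
  have hW0 : volume (W : Set (EuclideanSpace ℝ (Fin d))) = 0 := by
    apply Measure.addHaar_submodule
    intro h
    rw [h] at hWlt
    simp [finrank_euclideanSpace_fin] at hWlt
  have hWclosed : IsClosed (W : Set (EuclideanSpace ℝ (Fin d))) :=
    Submodule.closed_of_finiteDimensional W
  have hmeas : MeasurableSet ((↑) ⁻¹' (W : Set (EuclideanSpace ℝ (Fin d))) :
      Set (sphere (0 : EuclideanSpace ℝ (Fin d)) 1)) :=
    hWclosed.measurableSet.preimage continuous_subtype_val.measurable
  refine measure_mono_null (t := (↑) ⁻¹' (W : Set (EuclideanSpace ℝ (Fin d)))) ?_ ?_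
  · rintro y ⟨x, hxM, hx0, hyx⟩
    show (y : EuclideanSpace ℝ (Fin d)) ∈ W
    rw [hyx]
    exact W.smul_mem _ (hMW x hxM)
  · rw [Measure.toSphere_apply' _ hmeas]
    refine mul_eq_zero_of_right _ (measure_mono_null ?_ hW0)
    rintro z ⟨t, ht, x, hx, rfl⟩
    rcases hx with ⟨y, hy, rfl⟩
    exact W.smul_mem t hy
end

section
/- Let A ∈ ℝ^{m×d}, B ∈ ℝ^{ℓ×d} with BᵀB ≻ 0 and let v ∈ S^{d-1} be such that v is not a generalized eigenvector of (AᵀA, BᵀB). Then for x drawn uniformly on S^{d-1}, almost surely γ(x) := ⟨x, AᵀAx⟩⟨BᵀBx, v⟩ − ⟨x, BᵀBx⟩⟨AᵀAx, v⟩ ≠ 0 and α(x) := ⟨v, AᵀAx⟩⟨v, BᵀBv⟩ − ⟨v, BᵀBx⟩⟨v, AᵀAv⟩ ≠ 0. -/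
open MeasureTheory

lemma mv_null : ∀ {n : ℕ} (P : MvPolynomial (Fin n) ℝ), P ≠ 0 →
    volume {x : Fin n → ℝ | MvPolynomial.eval x P = 0} = 0 := by
  intro n
  induction n with
  | zero =>
    intro P hP
    obtain ⟨a, rfl⟩ := MvPolynomial.C_surjective (Fin 0) P
    have ha : a ≠ 0 := fun h => hP (by simp [h])
    rw [show {x : Fin 0 → ℝ | MvPolynomial.eval x (MvPolynomial.C a) = 0} = ∅ from by
      ext x; simp [ha]]
    simp
  | succ n ih =>
    intro P hP
    set Q := MvPolynomial.finSuccEquiv ℝ n P with hQdef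
    have hQ : Q ≠ 0 := by
      intro h
      apply hP
      have := congrArg (MvPolynomial.finSuccEquiv ℝ n).symm h
      rw [AlgEquiv.symm_apply_apply] at this
      simpa using this
    have hlc : Q.leadingCoeff ≠ 0 := Polynomial.leadingCoeff_ne_zero.mpr hQ
    have hN : volume {y : Fin n → ℝ | MvPolynomial.eval y Q.leadingCoeff = 0} = 0 := ih _ hlc
    -- measurable equiv
    set e := MeasurableEquiv.piFinSuccAbove (fun _ : Fin (n+1) => ℝ) 0 with he
    have hmp : MeasurePreserving (Prod.swap ∘ e) volume
        ((volume : Measure (Fin n → ℝ)).prod (volume : Measure ℝ)) :=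
      Measure.measurePreserving_swap.comp (volume_preserving_piFinSuccAbove (fun _ : Fin (n+1) => ℝ) 0)
    set s : Set ((Fin n → ℝ) × ℝ) :=
      {q | MvPolynomial.eval (Fin.cons q.2 q.1 : Fin (n+1) → ℝ) P = 0} with hs
    have hcont : Continuous fun q : (Fin n → ℝ) × ℝ => (Fin.cons q.2 q.1 : Fin (n+1) → ℝ) := by
      refine continuous_pi fun i => ?_
      refine Fin.cases ?_ (fun j => ?_) i
      · simpa using continuous_snd
      · simpa [Function.comp_def] using (continuous_apply j).comp continuous_fst
    have hsm : MeasurableSet s :=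
      ((isClosed_singleton.preimage ((MvPolynomial.continuous_eval P).comp hcont))).measurableSet
    have hpre : (Prod.swap ∘ e) ⁻¹' s = {x : Fin (n+1) → ℝ | MvPolynomial.eval x P = 0} := by
      ext x
      simp only [Set.mem_preimage, Function.comp_apply, Set.mem_setOf_eq, hs, he,
        MeasurableEquiv.piFinSuccAbove_apply, Prod.swap_prod_mk,
        Fin.insertNthEquiv_zero, Fin.consEquiv_symm_apply, Fin.cons_self_tail]
    rw [← hpre, hmp.measure_preimage hsm.nullMeasurableSet]
    rw [Measure.measure_prod_null hsm]
    have hae : ∀ᵐ y : Fin n → ℝ ∂volume, MvPolynomial.eval y Q.leadingCoeff ≠ 0 := by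
      simp only [ae_iff, not_not]
      exact hN
    filter_upwards [hae] with y hy
    show volume (Prod.mk y ⁻¹' s) = 0
    · have hR : (Q.map (MvPolynomial.eval y)) ≠ 0 := by
        intro h
        apply hy
        have h2 := congrArg (fun p => Polynomial.coeff p Q.natDegree) h
        simp only [Polynomial.coeff_map, Polynomial.coeff_zero] at h2
        rw [Polynomial.leadingCoeff]
        exact h2
      have : Prod.mk y ⁻¹' s = {a : ℝ | Polynomial.IsRoot (Q.map (MvPolynomial.eval y)) a} := by
        ext a
        simp only [Set.mem_preimage, Set.mem_setOf_eq, hs, Polynomial.IsRoot]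
        rw [MvPolynomial.eval_eq_eval_mv_eval']
      rw [this]
      exact Set.Finite.measure_zero (Polynomial.finite_setOf_isRoot hR) _

section Poly
open RealInnerProductSpace

variable {d : ℕ}

def IsPolyFun (f : EuclideanSpace ℝ (Fin d) → ℝ) : Prop :=
  ∃ P : MvPolynomial (Fin d) ℝ, ∀ x, MvPolynomial.eval (fun i => x i) P = f x

lemma IsPolyFun.const (c : ℝ) : IsPolyFun (fun _ : EuclideanSpace ℝ (Fin d) => c) :=
  ⟨MvPolynomial.C c, fun x => by simp⟩

lemma IsPolyFun.coord (i : Fin d) : IsPolyFun (fun x : EuclideanSpace ℝ (Fin d) => x i) :=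
  ⟨MvPolynomial.X i, fun x => by simp⟩

lemma IsPolyFun.mul {f g : EuclideanSpace ℝ (Fin d) → ℝ} (hf : IsPolyFun f) (hg : IsPolyFun g) :
    IsPolyFun (fun x => f x * g x) := by
  obtain ⟨P, hP⟩ := hf; obtain ⟨Q, hQ⟩ := hg
  exact ⟨P * Q, fun x => by simp [hP x, hQ x]⟩

lemma IsPolyFun.sub {f g : EuclideanSpace ℝ (Fin d) → ℝ} (hf : IsPolyFun f) (hg : IsPolyFun g) :
    IsPolyFun (fun x => f x - g x) := by
  obtain ⟨P, hP⟩ := hf; obtain ⟨Q, hQ⟩ := hg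
  exact ⟨P - Q, fun x => by simp [hP x, hQ x]⟩

lemma IsPolyFun.sum {ι : Type*} (s : Finset ι) (f : ι → EuclideanSpace ℝ (Fin d) → ℝ)
    (hf : ∀ i ∈ s, IsPolyFun (f i)) : IsPolyFun (fun x => ∑ i ∈ s, f i x) := by
  classical
  induction s using Finset.induction with
  | empty => simpa using IsPolyFun.const 0
  | insert a t hnot ih =>
    have h1 := hf a (Finset.mem_insert_self a t)
    have h2 := ih (fun i hi => hf i (Finset.mem_insert_of_mem hi))
    obtain ⟨P, hP⟩ := h1; obtain ⟨Q, hQ⟩ := h2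
    refine ⟨P + Q, fun x => ?_⟩
    simp [hP x, hQ x, Finset.sum_insert hnot]

lemma IsPolyFun.linCoord (T : EuclideanSpace ℝ (Fin d) →ₗ[ℝ] EuclideanSpace ℝ (Fin d))
    (i : Fin d) : IsPolyFun (fun x => T x i) := by
  set L : EuclideanSpace ℝ (Fin d) →ₗ[ℝ] ℝ :=
    (PiLp.projₗ 2 (fun _ : Fin d => ℝ) i).comp T with hL
  have hx : ∀ x : EuclideanSpace ℝ (Fin d),
      T x i = ∑ j, x j * L (EuclideanSpace.single j (1:ℝ)) := by
    intro x
    have hrep : x = ∑ j, x j • EuclideanSpace.single j (1:ℝ) := by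
      have := (EuclideanSpace.basisFun (Fin d) ℝ).sum_repr x
      simp only [EuclideanSpace.basisFun_apply, EuclideanSpace.basisFun_repr] at this
      exact this.symm
    calc T x i = L x := rfl
    _ = L (∑ j, x j • EuclideanSpace.single j (1:ℝ)) := by rw [← hrep]
    _ = ∑ j, x j * L (EuclideanSpace.single j (1:ℝ)) := by
        rw [map_sum]
        simp [smul_eq_mul]
  have hp : IsPolyFun (fun x : EuclideanSpace ℝ (Fin d) =>
      ∑ j, x j * L (EuclideanSpace.single j (1:ℝ))) :=
    IsPolyFun.sum _ _ (fun j _ => (IsPolyFun.coord j).mul (IsPolyFun.const _))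
  obtain ⟨P, hP⟩ := hp
  exact ⟨P, fun x => (hP x).trans (hx x).symm⟩

lemma IsPolyFun.innerRight (w : EuclideanSpace ℝ (Fin d))
    (T : EuclideanSpace ℝ (Fin d) →ₗ[ℝ] EuclideanSpace ℝ (Fin d)) :
    IsPolyFun (fun x => (⟪w, T x⟫ : ℝ)) := by
  have h : ∀ x : EuclideanSpace ℝ (Fin d), (⟪w, T x⟫ : ℝ) = ∑ i, w i * T x i := by
    intro x
    rw [PiLp.inner_apply]
    simp [RCLike.inner_apply, mul_comm]
  have : IsPolyFun (fun x : EuclideanSpace ℝ (Fin d) => ∑ i, w i * T x i) :=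
    IsPolyFun.sum _ _ (fun i _ => (IsPolyFun.const (w i)).mul (IsPolyFun.linCoord T i))
  obtain ⟨P, hP⟩ := this
  exact ⟨P, fun x => (hP x).trans (h x).symm⟩

lemma IsPolyFun.quadForm (T : EuclideanSpace ℝ (Fin d) →ₗ[ℝ] EuclideanSpace ℝ (Fin d)) :
    IsPolyFun (fun x => (⟪x, T x⟫ : ℝ)) := by
  have h : ∀ x : EuclideanSpace ℝ (Fin d), (⟪x, T x⟫ : ℝ) = ∑ i, x i * T x i := by
    intro x
    rw [PiLp.inner_apply]
    simp [RCLike.inner_apply, mul_comm]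
  have : IsPolyFun (fun x : EuclideanSpace ℝ (Fin d) => ∑ i, x i * T x i) :=
    IsPolyFun.sum _ _ (fun i _ => (IsPolyFun.coord i).mul (IsPolyFun.linCoord T i))
  obtain ⟨P, hP⟩ := this
  exact ⟨P, fun x => (hP x).trans (h x).symm⟩

lemma IsPolyFun.null_zeroSet {f : EuclideanSpace ℝ (Fin d) → ℝ} (hf : IsPolyFun f)
    (hne : ∃ x, f x ≠ 0) : volume {x : EuclideanSpace ℝ (Fin d) | f x = 0} = 0 := by
  obtain ⟨P, hP⟩ := hf
  have hPne : P ≠ 0 := by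
    rintro rfl
    obtain ⟨x, hx⟩ := hne
    exact hx (by rw [← hP x]; simp)
  have hmp := EuclideanSpace.volume_preserving_symm_measurableEquiv_toLp (Fin d)
  set W : Set (Fin d → ℝ) := {y | MvPolynomial.eval y P = 0} with hW
  have hWm : MeasurableSet W :=
    (isClosed_singleton.preimage (MvPolynomial.continuous_eval P)).measurableSet
  have hpre : (MeasurableEquiv.toLp 2 (Fin d → ℝ)).symm ⁻¹' W
      = {x : EuclideanSpace ℝ (Fin d) | f x = 0} := by
    ext x
    simp only [Set.mem_preimage, Set.mem_setOf_eq, hW]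
    rw [show ((MeasurableEquiv.toLp 2 (Fin d → ℝ)).symm x) = fun i => x i from rfl, hP x]
  rw [← hpre, hmp.measure_preimage hWm.nullMeasurableSet]
  exact mv_null P hPne

end Poly

section Main
open Matrix Metric Pointwise RealInnerProductSpace

lemma IsPolyFun.innerLeft {d : ℕ} (w : EuclideanSpace ℝ (Fin d))
    (T : EuclideanSpace ℝ (Fin d) →ₗ[ℝ] EuclideanSpace ℝ (Fin d)) :
    IsPolyFun (fun x => (⟪T x, w⟫ : ℝ)) := by
  obtain ⟨P, hP⟩ := IsPolyFun.innerRight w T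
  exact ⟨P, fun x => (hP x).trans (real_inner_comm _ _)⟩

theorem stmt11 {m l d : ℕ} (A : Matrix (Fin m) (Fin d) ℝ) (B : Matrix (Fin l) (Fin d) ℝ)
    (hB : (Bᴴ * B).PosDef) (v : EuclideanSpace ℝ (Fin d)) (hv : ‖v‖ = 1)
    (hnev : ¬∃ μ : ℝ, Matrix.toEuclideanLin (Aᴴ * A) v = μ • Matrix.toEuclideanLin (Bᴴ * B) v) :
    (volume : Measure (EuclideanSpace ℝ (Fin d))).toSphere
      {x : sphere (0 : EuclideanSpace ℝ (Fin d)) 1 |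
        ⟪(x : EuclideanSpace ℝ (Fin d)), Matrix.toEuclideanLin (Aᴴ * A) x⟫
            * ⟪Matrix.toEuclideanLin (Bᴴ * B) x, v⟫
          - ⟪(x : EuclideanSpace ℝ (Fin d)), Matrix.toEuclideanLin (Bᴴ * B) x⟫
            * ⟪Matrix.toEuclideanLin (Aᴴ * A) x, v⟫ = 0
        ∨ ⟪v, Matrix.toEuclideanLin (Aᴴ * A) x⟫ * ⟪v, Matrix.toEuclideanLin (Bᴴ * B) v⟫
          - ⟪v, Matrix.toEuclideanLin (Bᴴ * B) x⟫ * ⟪v, Matrix.toEuclideanLin (Aᴴ * A) v⟫ = 0}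
      = 0 := by
  classical
  set TA := Matrix.toEuclideanLin (Aᴴ * A) with hTAdef
  set TB := Matrix.toEuclideanLin (Bᴴ * B) with hTBdef
  have hAs : TA.IsSymmetric := by
    rw [hTAdef]
    exact Matrix.isHermitian_iff_isSymmetric.mp (Matrix.isHermitian_conjTranspose_mul_self A)
  have hBs : TB.IsSymmetric := by
    rw [hTBdef]
    exact Matrix.isHermitian_iff_isSymmetric.mp (Matrix.isHermitian_conjTranspose_mul_self B)
  set cA : ℝ := ⟪v, TA v⟫ with hcAdef
  set cB : ℝ := ⟪v, TB v⟫ with hcBdef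
  have hvne : v ≠ 0 := by
    intro h
    rw [h, norm_zero] at hv
    exact one_ne_zero hv.symm
  have hcB : 0 < cB := by
    have hvne' : (fun i => v i : Fin d → ℝ) ≠ 0 := by
      intro h
      apply hvne
      ext i
      exact congrFun h i
    have hpos := (Matrix.posDef_iff_dotProduct_mulVec.mp hB).2 hvne'
    have heq : cB = dotProduct (star (fun i => v i)) ((Bᴴ * B) *ᵥ fun i => v i) := by
      rw [hcBdef, hTBdef, PiLp.inner_apply]
      simp only [RCLike.inner_apply, starRingEnd_apply, star_trivial, dotProduct,
        Pi.star_apply]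
      exact Finset.sum_congr rfl fun _ _ => mul_comm _ _
    rw [heq]
    exact hpos
  -- the key nondegenerate vector
  set w : EuclideanSpace ℝ (Fin d) := cB • TA v - cA • TB v with hwdef
  have hw : w ≠ 0 := by
    intro h
    apply hnev
    refine ⟨cB⁻¹ * cA, ?_⟩
    have h2 : cB • TA v = cA • TB v := by
      rw [hwdef, sub_eq_zero] at h
      exact h
    calc TA v = cB⁻¹ • (cB • TA v) := by rw [smul_smul, inv_mul_cancel₀ hcB.ne', one_smul]
    _ = cB⁻¹ • (cA • TB v) := by rw [h2]
    _ = (cB⁻¹ * cA) • TB v := by rw [smul_smul]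
  -- nonvanishing of gamma
  have hγne : ∃ x : EuclideanSpace ℝ (Fin d),
      ⟪x, TA x⟫ * ⟪TB x, v⟫ - ⟪x, TB x⟫ * ⟪TA x, v⟫ ≠ 0 := by
    by_contra hcon
    push_neg at hcon
    have hkey : ∀ y : EuclideanSpace ℝ (Fin d), ⟪TA v, y⟫ * cB = ⟪TB v, y⟫ * cA := by
      intro y
      have h1 : ⟪v, TA y⟫ = ⟪TA v, y⟫ := (hAs v y).symm
      have h2 : ⟪y, TA v⟫ = ⟪TA v, y⟫ := real_inner_comm _ _
      have h3 : ⟪TA y, v⟫ = ⟪TA v, y⟫ := (hAs y v).trans (real_inner_comm _ _)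
      have h4 : ⟪TA v, v⟫ = cA := real_inner_comm _ _
      have g1 : ⟪v, TB y⟫ = ⟪TB v, y⟫ := (hBs v y).symm
      have g2 : ⟪y, TB v⟫ = ⟪TB v, y⟫ := real_inner_comm _ _
      have g3 : ⟪TB y, v⟫ = ⟪TB v, y⟫ := (hBs y v).trans (real_inner_comm _ _)
      have g4 : ⟪TB v, v⟫ = cB := real_inner_comm _ _
      have key : ∀ t : ℝ,
          (cA + 2*t*⟪TA v, y⟫ + t^2*⟪y, TA y⟫) * (cB + t*⟪TB v, y⟫)
          - (cB + 2*t*⟪TB v, y⟫ + t^2*⟪y, TB y⟫) * (cA + t*⟪TA v, y⟫) = 0 := by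
        intro t
        have h0 := hcon (v + t • y)
        simp only [map_add, _root_.map_smul, inner_add_left, inner_add_right,
          real_inner_smul_left, real_inner_smul_right] at h0
        rw [h1, h2, h3, h4, g1, g2, g3, g4] at h0
        linear_combination h0
      have k1 := key 1
      have k2 := key (-1)
      have k3 := key 2
      have k4 := key (-2)
      linear_combination (2/3 : ℝ) * k1 - (2/3 : ℝ) * k2 - (1/12 : ℝ) * k3 + (1/12 : ℝ) * k4
    apply hw
    have h5 : (⟪w, w⟫ : ℝ) = 0 := by
      rw [hwdef]
      rw [inner_sub_left, real_inner_smul_left, real_inner_smul_left]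
      have := hkey (cB • TA v - cA • TB v)
      linarith [this]
    exact inner_self_eq_zero.mp h5
  -- nonvanishing of alpha
  have hαne : ∃ x : EuclideanSpace ℝ (Fin d),
      ⟪v, TA x⟫ * cB - ⟪v, TB x⟫ * cA ≠ 0 := by
    refine ⟨w, ?_⟩
    have h1 : ⟪v, TA w⟫ = ⟪TA v, w⟫ := (hAs v w).symm
    have h2 : ⟪v, TB w⟫ = ⟪TB v, w⟫ := (hBs v w).symm
    rw [h1, h2]
    have : ⟪TA v, w⟫ * cB - ⟪TB v, w⟫ * cA = ⟪w, w⟫ := by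
      rw [hwdef, inner_sub_left, real_inner_smul_left, real_inner_smul_left,
        inner_sub_right, inner_sub_right, real_inner_smul_right, real_inner_smul_right,
        real_inner_smul_right, real_inner_smul_right]
      ring
    rw [this]
    exact inner_self_ne_zero.mpr hw
  -- zero sets in the ambient space are null
  have hfz : volume {x : EuclideanSpace ℝ (Fin d) |
      ⟪x, TA x⟫ * ⟪TB x, v⟫ - ⟪x, TB x⟫ * ⟪TA x, v⟫ = 0} = 0 := by
    refine IsPolyFun.null_zeroSet ?_ hγne
    exact ((IsPolyFun.quadForm TA).mul (IsPolyFun.innerLeft v TB)).sub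
      ((IsPolyFun.quadForm TB).mul (IsPolyFun.innerLeft v TA))
  have hgz : volume {x : EuclideanSpace ℝ (Fin d) |
      ⟪v, TA x⟫ * cB - ⟪v, TB x⟫ * cA = 0} = 0 := by
    refine IsPolyFun.null_zeroSet ?_ hαne
    exact ((IsPolyFun.innerRight v TA).mul (IsPolyFun.const cB)).sub
      ((IsPolyFun.innerRight v TB).mul (IsPolyFun.const cA))
  -- measurability of the set on the sphere
  have hTAc : Continuous fun x : EuclideanSpace ℝ (Fin d) => TA x :=
    TA.continuous_of_finiteDimensional
  have hTBc : Continuous fun x : EuclideanSpace ℝ (Fin d) => TB x :=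
    TB.continuous_of_finiteDimensional
  have hcoe : Continuous fun x : sphere (0 : EuclideanSpace ℝ (Fin d)) 1 =>
      (x : EuclideanSpace ℝ (Fin d)) := continuous_subtype_val
  have hc1 : Continuous fun x : sphere (0 : EuclideanSpace ℝ (Fin d)) 1 =>
      (⟪(x : EuclideanSpace ℝ (Fin d)), TA x⟫ * ⟪TB (x : EuclideanSpace ℝ (Fin d)), v⟫
        - ⟪(x : EuclideanSpace ℝ (Fin d)), TB x⟫ * ⟪TA (x : EuclideanSpace ℝ (Fin d)), v⟫ : ℝ) := by
    exact ((hcoe.inner (hTAc.comp hcoe)).mul ((hTBc.comp hcoe).inner continuous_const)).sub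
      ((hcoe.inner (hTBc.comp hcoe)).mul ((hTAc.comp hcoe).inner continuous_const))
  have hc2 : Continuous fun x : sphere (0 : EuclideanSpace ℝ (Fin d)) 1 =>
      (⟪v, TA (x : EuclideanSpace ℝ (Fin d))⟫ * cB
        - ⟪v, TB (x : EuclideanSpace ℝ (Fin d))⟫ * cA : ℝ) := by
    exact ((continuous_const.inner (hTAc.comp hcoe)).mul continuous_const).sub
      ((continuous_const.inner (hTBc.comp hcoe)).mul continuous_const)
  have hSm : MeasurableSet {x : sphere (0 : EuclideanSpace ℝ (Fin d)) 1 |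
        ⟪(x : EuclideanSpace ℝ (Fin d)), TA x⟫ * ⟪TB (x : EuclideanSpace ℝ (Fin d)), v⟫
          - ⟪(x : EuclideanSpace ℝ (Fin d)), TB x⟫ * ⟪TA (x : EuclideanSpace ℝ (Fin d)), v⟫ = 0
        ∨ ⟪v, TA (x : EuclideanSpace ℝ (Fin d))⟫ * cB
          - ⟪v, TB (x : EuclideanSpace ℝ (Fin d))⟫ * cA = 0} := by
    rw [Set.setOf_or]
    exact ((isClosed_eq hc1 continuous_const).measurableSet).union
      ((isClosed_eq hc2 continuous_const).measurableSet)
  rw [Measure.toSphere_apply' _ hSm]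
  have hsub : Set.Ioo (0:ℝ) 1 • ((↑) '' {x : sphere (0 : EuclideanSpace ℝ (Fin d)) 1 |
        ⟪(x : EuclideanSpace ℝ (Fin d)), TA x⟫ * ⟪TB (x : EuclideanSpace ℝ (Fin d)), v⟫
          - ⟪(x : EuclideanSpace ℝ (Fin d)), TB x⟫ * ⟪TA (x : EuclideanSpace ℝ (Fin d)), v⟫ = 0
        ∨ ⟪v, TA (x : EuclideanSpace ℝ (Fin d))⟫ * cB
          - ⟪v, TB (x : EuclideanSpace ℝ (Fin d))⟫ * cA = 0})
      ⊆ {x : EuclideanSpace ℝ (Fin d) |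
          ⟪x, TA x⟫ * ⟪TB x, v⟫ - ⟪x, TB x⟫ * ⟪TA x, v⟫ = 0}
        ∪ {x : EuclideanSpace ℝ (Fin d) | ⟪v, TA x⟫ * cB - ⟪v, TB x⟫ * cA = 0} := by
    intro x hx
    rw [Set.mem_smul] at hx
    obtain ⟨r, hr, z, hz, rfl⟩ := hx
    obtain ⟨y, hy, rfl⟩ := hz
    rcases hy with hy | hy
    · left
      show ⟪r • (y : EuclideanSpace ℝ (Fin d)), TA (r • (y : EuclideanSpace ℝ (Fin d)))⟫
          * ⟪TB (r • (y : EuclideanSpace ℝ (Fin d))), v⟫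
        - ⟪r • (y : EuclideanSpace ℝ (Fin d)), TB (r • (y : EuclideanSpace ℝ (Fin d)))⟫
          * ⟪TA (r • (y : EuclideanSpace ℝ (Fin d))), v⟫ = 0
      simp only [_root_.map_smul, real_inner_smul_left, real_inner_smul_right]
      linear_combination (r^3 : ℝ) * hy
    · right
      show ⟪v, TA (r • (y : EuclideanSpace ℝ (Fin d)))⟫ * cB
        - ⟪v, TB (r • (y : EuclideanSpace ℝ (Fin d)))⟫ * cA = 0
      simp only [_root_.map_smul, real_inner_smul_left, real_inner_smul_right]
      linear_combination (r : ℝ) * hy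
  rw [measure_mono_null hsub (measure_union_null hfz hgz), mul_zero]

end Main
end

section
/- Let (v^k) be iterates maximizing f(v) = ‖Av‖²/‖Bv‖² with v^{k+1} = (v^k + τ_k x^k)/‖v^k + τ_k x^k‖ for unit vectors x^k ∉ span{v^k} and τ_k maximizing τ ↦ f(v^k + τ x^k). Then with a_k = ‖Av^k‖², b_k = ⟨Av^k, Ax^k⟩, c_k = ‖Ax^k‖², d_k = ‖Bv^k‖², e_k = ⟨Bv^k, Bx^k⟩, f_k = ‖Bx^k‖², the one-step increase satisfies f(v^{k+1}) − f(v^k) = τ_k · [b_k(d_k + τ_k² f_k) − e_k(a_k + τ_k² c_k)] / [d_k(d_k + 2τ_k e_k + τ_k² f_k)]. -/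
open Matrix RealInnerProductSpace

/-- The generalized Rayleigh quotient `f(v) = ‖Av‖²/‖Bv‖²`. -/
noncomputable def genRayleigh {m l d : ℕ} (A : Matrix (Fin m) (Fin d) ℝ)
    (B : Matrix (Fin l) (Fin d) ℝ) (v : EuclideanSpace ℝ (Fin d)) : ℝ :=
  ‖Matrix.toEuclideanLin A v‖ ^ 2 / ‖Matrix.toEuclideanLin B v‖ ^ 2

theorem stmt13 {m l d : ℕ} (A : Matrix (Fin m) (Fin d) ℝ) (B : Matrix (Fin l) (Fin d) ℝ)
    (hker : ∀ u : EuclideanSpace ℝ (Fin d), Matrix.toEuclideanLin B u = 0 → u = 0)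
    (v x : EuclideanSpace ℝ (Fin d)) (hv : ‖v‖ = 1) (hx : ‖x‖ = 1)
    (hlin : x ∉ Submodule.span ℝ ({v} : Set (EuclideanSpace ℝ (Fin d)))) (τ : ℝ)
    (hτ : ∀ t : ℝ, genRayleigh A B (v + t • x) ≤ genRayleigh A B (v + τ • x))
    (a b c e g h : ℝ)
    (ha : a = ‖Matrix.toEuclideanLin A v‖ ^ 2)
    (hb : b = ⟪Matrix.toEuclideanLin A v, Matrix.toEuclideanLin A x⟫)
    (hc : c = ‖Matrix.toEuclideanLin A x‖ ^ 2)
    (hd : e = ‖Matrix.toEuclideanLin B v‖ ^ 2)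
    (he : g = ⟪Matrix.toEuclideanLin B v, Matrix.toEuclideanLin B x⟫)
    (hf : h = ‖Matrix.toEuclideanLin B x‖ ^ 2) :
    genRayleigh A B (‖v + τ • x‖⁻¹ • (v + τ • x)) - genRayleigh A B v
      = τ * (b * (e + τ ^ 2 * h) - g * (a + τ ^ 2 * c))
          / (e * (e + 2 * τ * g + τ ^ 2 * h)) := by
  set La := Matrix.toEuclideanLin A with hLa
  set Lb := Matrix.toEuclideanLin B with hLb
  have hvne : v ≠ 0 := by intro hh; rw [hh] at hv; simp at hv
  have hne : ∀ t : ℝ, v + t • x ≠ 0 := by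
    intro t hh
    rcases eq_or_ne t 0 with rfl | ht
    · simp at hh; exact hvne hh
    · apply hlin
      rw [Submodule.mem_span_singleton]
      refine ⟨-t⁻¹, ?_⟩
      have h1 : t • x = -v := by linear_combination (norm := module) hh
      have hx' : x = t⁻¹ • (t • x) := by rw [smul_smul, inv_mul_cancel₀ ht, one_smul]
      rw [hx', h1]; module
  have hP : ∀ t : ℝ, ‖La (v + t • x)‖ ^ 2 = a + 2 * t * b + t ^ 2 * c := by
    intro t
    rw [map_add, _root_.map_smul, norm_add_sq_real, real_inner_smul_right, norm_smul,
      ha, hb, hc]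
    rw [Real.norm_eq_abs, mul_pow, sq_abs]
    ring
  have hQ : ∀ t : ℝ, ‖Lb (v + t • x)‖ ^ 2 = e + 2 * t * g + t ^ 2 * h := by
    intro t
    rw [map_add, _root_.map_smul, norm_add_sq_real, real_inner_smul_right, norm_smul,
      hd, he, hf]
    rw [Real.norm_eq_abs, mul_pow, sq_abs]
    ring
  have hQpos : ∀ t : ℝ, 0 < e + 2 * t * g + t ^ 2 * h := by
    intro t
    rw [← hQ t]
    have hne2 : Lb (v + t • x) ≠ 0 := fun hh => hne t (hker _ hh)
    exact pow_pos (norm_pos_iff.mpr hne2) 2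
  have hepos : 0 < e := by have := hQpos 0; simpa using this
  have hQτ := hQpos τ
  have hgen : ∀ t : ℝ, genRayleigh A B (v + t • x)
      = (a + 2 * t * b + t ^ 2 * c) / (e + 2 * t * g + t ^ 2 * h) := by
    intro t
    rw [genRayleigh, ← hLa, ← hLb, hP t, hQ t]
  have hgenv : genRayleigh A B v = a / e := by
    have := hgen 0; simpa using this
  have hscale : genRayleigh A B (‖v + τ • x‖⁻¹ • (v + τ • x))
      = genRayleigh A B (v + τ • x) := by
    have hn : ‖v + τ • x‖ ≠ 0 := norm_ne_zero_iff.mpr (hne τ)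
    rw [genRayleigh, genRayleigh, ← hLa, ← hLb, _root_.map_smul, _root_.map_smul,
      norm_smul, norm_smul, norm_inv, norm_norm, mul_pow, mul_pow]
    rw [mul_div_mul_left _ _ (pow_ne_zero 2 (inv_ne_zero hn))]
  have hFmin : ∀ t : ℝ, 0 ≤ (a + 2 * τ * b + τ ^ 2 * c) * (e + 2 * t * g + t ^ 2 * h)
      - (a + 2 * t * b + t ^ 2 * c) * (e + 2 * τ * g + τ ^ 2 * h) := by
    intro t
    have h1 := hτ t
    rw [hgen t, hgen τ] at h1
    have h2 := (div_le_div_iff₀ (hQpos t) (hQpos τ)).mp h1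
    linarith [h2]
  set F : ℝ → ℝ := fun t => (a + 2 * τ * b + τ ^ 2 * c) * (e + 2 * t * g + t ^ 2 * h)
      - (a + 2 * t * b + t ^ 2 * c) * (e + 2 * τ * g + τ ^ 2 * h) with hFdef
  have hder : HasDerivAt F ((a + 2 * τ * b + τ ^ 2 * c) * (2 * g + 2 * τ * h)
      - (2 * b + 2 * τ * c) * (e + 2 * τ * g + τ ^ 2 * h)) τ := by
    have h1 : HasDerivAt (fun t : ℝ => e + 2 * t * g + t ^ 2 * h)
        (2 * g + 2 * τ * h) τ := by
      have hh := ((((hasDerivAt_id τ).const_mul (2:ℝ)).mul_const g).add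
        ((hasDerivAt_pow 2 τ).mul_const h)).const_add e
      convert hh using 1
      · rfl
      · rfl
      · funext t; simp only [id_eq, Pi.add_apply]; ring
      · norm_num
    have h2 : HasDerivAt (fun t : ℝ => a + 2 * t * b + t ^ 2 * c)
        (2 * b + 2 * τ * c) τ := by
      have hh := ((((hasDerivAt_id τ).const_mul (2:ℝ)).mul_const b).add
        ((hasDerivAt_pow 2 τ).mul_const c)).const_add a
      convert hh using 1
      · rfl
      · rfl
      · funext t; simp only [id_eq, Pi.add_apply]; ring
      · norm_num
    exact (h1.const_mul _).sub (h2.mul_const _)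
  have hmin : IsLocalMin F τ := by
    apply Filter.Eventually.of_forall
    intro t
    have h0 : F τ = 0 := by simp only [hFdef]; ring
    rw [h0]; exact hFmin t
  have hkey : (a + 2 * τ * b + τ ^ 2 * c) * (2 * g + 2 * τ * h)
      - (2 * b + 2 * τ * c) * (e + 2 * τ * g + τ ^ 2 * h) = 0 := by
    have := hmin.deriv_eq_zero
    rwa [hder.deriv] at this
  rw [hscale, hgen τ, hgenv]
  rw [div_sub_div _ _ (ne_of_gt hQτ) (ne_of_gt hepos), div_eq_div_iff (by positivity)
    (by positivity)]
  linear_combination (-(τ * e * (e + 2 * τ * g + τ ^ 2 * h)) / 2) * hkey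
end
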